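/- arXiv:2103.11888 — 2 statements merged into one kernel-verified Lean document; each statement's English description precedes it below -/
import Mathlib

section
/- If f: ℝⁿ → ℝ is convex, differentiable, and β-smooth, and x* is a global minimizer of f, then gradient descent iterates x_{t+1} = x_t - μ∇f(x_t) with μ ≤ 1/β satisfy f(x_t) - f(x*) ≤ ‖x_0 - x*‖²/(2μt). -/
open InnerProductSpace Set

local notation "⟪" x ", " y "⟫" => @inner ℝ _ _ x y

variable {n : ℕ}

private lemma gdLineDeriv (f : EuclideanSpace ℝ (Fin n) → ℝ)
    (hdiff : Differentiable ℝ f) (x v : EuclideanSpace ℝ (Fin n)) (t : ℝ) :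
    HasDerivAt (fun s : ℝ => f (x + s • v)) ⟪gradient f (x + t • v), v⟫ t := by
  have hc : HasDerivAt (fun s : ℝ => x + s • v) v t := by
    simpa using ((hasDerivAt_id t).smul_const v).const_add x
  have hg := (hdiff (x + t • v)).hasGradientAt.hasFDerivAt
  have := hg.comp_hasDerivAt t hc
  exact this

/-- first-order condition for convexity -/
private lemma convex_lower (f : EuclideanSpace ℝ (Fin n) → ℝ)
    (hconv : ConvexOn ℝ Set.univ f) (hdiff : Differentiable ℝ f)
    (x y : EuclideanSpace ℝ (Fin n)) :
    f x + ⟪gradient f x, y - x⟫ ≤ f y := by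
  set φ : ℝ → ℝ := fun s => f (x + s • (y - x)) with hφ
  have key : ∀ s : ℝ, x + s • (y - x) = AffineMap.lineMap x y s := by
    intro s; rw [AffineMap.lineMap_apply_module]; module
  have hφconv : ConvexOn ℝ Set.univ φ := by
    have h2 := hconv.comp_affineMap
      (AffineMap.lineMap x y : ℝ →ᵃ[ℝ] EuclideanSpace ℝ (Fin n))
    simp only [Set.preimage_univ] at h2
    suffices hφeq : φ = f ∘ AffineMap.lineMap x y by rw [hφeq]; exact h2
    funext s
    simp [hφ, Function.comp, key s]
  have hd : HasDerivAt φ ⟪gradient f x, y - x⟫ 0 := by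
    have := gdLineDeriv f hdiff x (y - x) 0
    simpa using this
  have := hφconv.le_slope_of_hasDerivAt (mem_univ (0:ℝ)) (mem_univ (1:ℝ))
    one_pos hd
  have hslope : slope φ 0 1 = f y - f x := by
    simp [slope, hφ]
  rw [hslope] at this
  linarith

/-- descent lemma from β-Lipschitz gradient -/
private lemma descent_lemma (f : EuclideanSpace ℝ (Fin n) → ℝ) (β : ℝ) (hβ : 0 ≤ β)
    (hdiff : Differentiable ℝ f)
    (hlip : LipschitzWith (Real.toNNReal β) (fun x => gradient f x))
    (x y : EuclideanSpace ℝ (Fin n)) :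
    f y ≤ f x + ⟪gradient f x, y - x⟫ + β / 2 * ‖y - x‖ ^ 2 := by
  set v := y - x with hv
  set h : ℝ → ℝ := fun s =>
    f (x + s • v) - s * ⟪gradient f x, v⟫ - β * s ^ 2 / 2 * ‖v‖ ^ 2 with hh
  have hder : ∀ s : ℝ, HasDerivAt h
      (⟪gradient f (x + s • v), v⟫ - ⟪gradient f x, v⟫ - β * s * ‖v‖ ^ 2) s := by
    intro s
    have h1 := gdLineDeriv f hdiff x v s
    have h2 : HasDerivAt (fun s : ℝ => s * ⟪gradient f x, v⟫) ⟪gradient f x, v⟫ s := by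
      simpa using (hasDerivAt_id s).mul_const ⟪gradient f x, v⟫
    have h3 : HasDerivAt (fun s : ℝ => β * s ^ 2 / 2 * ‖v‖ ^ 2) (β * s * ‖v‖ ^ 2) s := by
      have : HasDerivAt (fun s : ℝ => s ^ 2) (2 * s) s := by
        simpa using hasDerivAt_pow 2 s
      have := ((this.const_mul β).div_const 2).mul_const (‖v‖ ^ 2)
      exact this.congr_deriv (by ring)
    exact (h1.sub h2).sub h3
  have hmono : h 1 ≤ h 0 := by
    have hcont : ContinuousOn h (Icc 0 1) :=
      fun s _ => ((hder s).continuousAt).continuousWithinAt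
    have hle : ∀ s ∈ interior (Icc (0:ℝ) 1),
        deriv h s ≤ 0 := by
      intro s hs
      rw [interior_Icc, mem_Ioo] at hs
      rw [(hder s).deriv]
      have hcs : ⟪gradient f (x + s • v) - gradient f x, v⟫
          ≤ ‖gradient f (x + s • v) - gradient f x‖ * ‖v‖ :=
        real_inner_le_norm _ _
      have hlipb : ‖gradient f (x + s • v) - gradient f x‖ ≤ β * (s * ‖v‖) := by
        have hl := hlip.dist_le_mul (x + s • v) x
        simp only [dist_eq_norm] at hl
        have he : (x + s • v) - x = s • v := by abel
        rw [he, Real.coe_toNNReal _ hβ, norm_smul, Real.norm_eq_abs,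
          abs_of_pos hs.1] at hl
        simpa [mul_assoc] using hl
      have hnn : (0:ℝ) ≤ ‖v‖ := norm_nonneg _
      have := hcs.trans (by nlinarith : ‖gradient f (x + s • v) - gradient f x‖ * ‖v‖
          ≤ β * s * ‖v‖ ^ 2)
      rw [inner_sub_left] at this
      linarith
    have hanti := antitoneOn_of_deriv_nonpos (convex_Icc 0 1) hcont
      (fun s hs => ((hder s).differentiableAt).differentiableWithinAt) hle
    exact hanti (by norm_num : (0:ℝ) ∈ Icc (0:ℝ) 1)
      (by norm_num : (1:ℝ) ∈ Icc (0:ℝ) 1) (by norm_num)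
  have h0 : h 0 = f x := by simp [hh]
  have h1 : h 1 = f y - ⟪gradient f x, v⟫ - β / 2 * ‖v‖ ^ 2 := by
    have hxy : x + (1:ℝ) • v = y := by rw [one_smul, hv]; abel
    simp only [hh, hxy, one_pow, one_mul]
    ring
  rw [h0, h1] at hmono
  linarith

theorem stmt_1 {n : ℕ} (f : EuclideanSpace ℝ (Fin n) → ℝ) (β μ : ℝ)
    (hβ : 0 < β) (hμ : 0 < μ) (hμβ : μ ≤ 1 / β)
    (hconv : ConvexOn ℝ Set.univ f)
    (hdiff : Differentiable ℝ f)
    (hlip : LipschitzWith (Real.toNNReal β) (fun x => gradient f x))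
    (xstar : EuclideanSpace ℝ (Fin n)) (hmin : ∀ y, f xstar ≤ f y)
    (x : ℕ → EuclideanSpace ℝ (Fin n))
    (hx : ∀ t, x (t + 1) = x t - μ • gradient f (x t)) :
    ∀ t : ℕ, 0 < t → f (x t) - f xstar ≤ ‖x 0 - xstar‖ ^ 2 / (2 * μ * t) := by
  have hμβ' : μ * β ≤ 1 := by
    rw [le_div_iff₀ hβ] at hμβ; linarith
  set g : ℕ → EuclideanSpace ℝ (Fin n) := fun t => gradient f (x t) with hg
  -- descent step
  have hdesc : ∀ t, f (x (t + 1)) ≤ f (x t) - μ / 2 * ‖g t‖ ^ 2 := by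
    intro t
    have := descent_lemma f β hβ.le hdiff hlip (x t) (x (t + 1))
    have hst : x (t + 1) - x t = -(μ • g t) := by rw [hx t]; abel
    rw [hst] at this
    rw [inner_neg_right, inner_smul_right, real_inner_self_eq_norm_sq,
      norm_neg, norm_smul, Real.norm_eq_abs, abs_of_pos hμ, mul_pow] at this
    simp only [hg] at this ⊢
    nlinarith [mul_nonneg (mul_nonneg (by linarith : (0:ℝ) ≤ 1 - μ * β) hμ.le)
      (sq_nonneg ‖gradient f (x t)‖)]
  -- convexity bound
  have hcb : ∀ t, f (x t) - f xstar ≤ ⟪g t, x t - xstar⟫ := by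
    intro t
    have := convex_lower f hconv hdiff (x t) xstar
    have : ⟪g t, xstar - x t⟫ ≤ f xstar - f (x t) := by linarith
    have h2 : xstar - x t = -(x t - xstar) := by abel
    rw [h2, inner_neg_right] at this
    linarith
  -- combined one-step bound
  set D : ℕ → ℝ := fun t => ‖x t - xstar‖ ^ 2 with hD
  have hstep : ∀ t, f (x (t + 1)) - f xstar ≤ (D t - D (t + 1)) / (2 * μ) := by
    intro t
    have hnorm : D (t + 1) = D t - 2 * μ * ⟪g t, x t - xstar⟫ + μ ^ 2 * ‖g t‖ ^ 2 := by
      have hst : x (t + 1) - xstar = (x t - xstar) - μ • g t := by rw [hx t]; abel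
      simp only [hD, hst]
      rw [norm_sub_sq_real, inner_smul_right, norm_smul, Real.norm_eq_abs,
        abs_of_pos hμ, mul_pow, real_inner_comm]
      ring
    have h1 := hdesc t
    have h2 := hcb t
    rw [le_div_iff₀ (by positivity : (0:ℝ) < 2 * μ)]
    nlinarith [h1, h2, hnorm, sq_nonneg ‖g t‖, hμ.le]
  -- monotone decrease
  have hmono : ∀ t, f (x (t + 1)) ≤ f (x t) := by
    intro t
    have := hdesc t
    nlinarith [sq_nonneg ‖g t‖]
  -- main induction
  have hmain : ∀ t : ℕ, (t : ℝ) * (f (x t) - f xstar) ≤ (D 0 - D t) / (2 * μ) := by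
    intro t
    induction t with
    | zero => simp
    | succ t ih =>
      have h1 := hstep t
      have h2 : f (x (t + 1)) - f xstar ≤ f (x t) - f xstar := by
        have := hmono t; linarith
      have h3 : (t : ℝ) * (f (x (t + 1)) - f xstar) ≤ (t : ℝ) * (f (x t) - f xstar) :=
        mul_le_mul_of_nonneg_left h2 (Nat.cast_nonneg t)
      have : ((t : ℝ) + 1) * (f (x (t + 1)) - f xstar)
          ≤ (D 0 - D t) / (2 * μ) + (D t - D (t + 1)) / (2 * μ) := by
        calc ((t : ℝ) + 1) * (f (x (t + 1)) - f xstar)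
            = (t : ℝ) * (f (x (t + 1)) - f xstar) + (f (x (t + 1)) - f xstar) := by ring
          _ ≤ (D 0 - D t) / (2 * μ) + (D t - D (t + 1)) / (2 * μ) := by
              have := h3.trans ih
              linarith
      calc ((t + 1 : ℕ) : ℝ) * (f (x (t + 1)) - f xstar)
          = ((t : ℝ) + 1) * (f (x (t + 1)) - f xstar) := by push_cast; ring
        _ ≤ (D 0 - D t) / (2 * μ) + (D t - D (t + 1)) / (2 * μ) := this
        _ = (D 0 - D (t + 1)) / (2 * μ) := by ring
  intro t ht
  have htR : (0:ℝ) < t := by exact_mod_cast ht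
  have hDt : 0 ≤ D t := sq_nonneg _
  have hm := hmain t
  rw [le_div_iff₀ (by positivity : (0:ℝ) < 2 * μ)] at hm
  rw [le_div_iff₀ (by positivity : (0:ℝ) < 2 * μ * t)]
  have hD0 : D 0 = ‖x 0 - xstar‖ ^ 2 := rfl
  nlinarith [hm, hDt]
end

section
/- If Q: ℝᵃ × ℝᵇ → ℝ is bounded below, differentiable, and β-smooth, then along block coordinate gradient descent with step size μ < 1/β, the block gradients vanish in the limit: ‖∇_θQ(θ_t, ω_t)‖ → 0 and ‖∇_ωQ(θ_{t+1}, ω_t)‖ → 0 as t → ∞. -/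
open Filter Topology RealInnerProductSpace

-- Descent lemma with non-optimal constant β instead of β/2.
lemma descent_lemma_s13 {E : Type*} [NormedAddCommGroup E] [NormedSpace ℝ E]
    (f : E → ℝ) (β : ℝ) (hβ : 0 ≤ β) (hdiff : Differentiable ℝ f)
    (hlip : ∀ x y, ‖fderiv ℝ f y - fderiv ℝ f x‖ ≤ β * ‖y - x‖) (x d : E) :
    f (x + d) ≤ f x + fderiv ℝ f x d + β * ‖d‖ ^ 2 := by
  set L := fderiv ℝ f x with hL
  set g : E → ℝ := fun y => f y - L y with hg
  have hg' : ∀ y ∈ segment ℝ x (x + d),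
      HasFDerivWithinAt g (fderiv ℝ f y - L) (segment ℝ x (x + d)) y := by
    intro y _
    exact (((hdiff y).hasFDerivAt).sub L.hasFDerivAt).hasFDerivWithinAt
  have key : ‖g (x + d) - g x‖ ≤ (β * ‖d‖) * ‖(x + d) - x‖ := by
    apply (convex_segment x (x + d)).norm_image_sub_le_of_norm_hasFDerivWithin_le hg' ?_
      (left_mem_segment ℝ x (x + d)) (right_mem_segment ℝ x (x + d))
    intro y hy
    obtain ⟨s, t, hs, ht, hst, rfl⟩ := hy
    have h1 : s • x + t • (x + d) - x = t • d := by
      have : s = 1 - t := by linarith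
      rw [this]; module
    calc ‖fderiv ℝ f (s • x + t • (x + d)) - L‖ ≤ β * ‖s • x + t • (x + d) - x‖ :=
          hlip x _
      _ ≤ β * ‖d‖ := by
          rw [h1, norm_smul, Real.norm_eq_abs, abs_of_nonneg ht]
          have ht1 : t ≤ 1 := by linarith
          nlinarith [mul_nonneg (mul_nonneg hβ (norm_nonneg d)) (by linarith : (0:ℝ) ≤ 1 - t)]
  have h2 : L (x + d) - L x = L d := by rw [← map_sub]; congr 1; abel
  have h3 : g (x + d) - g x = f (x + d) - f x - L d := by
    simp only [hg]; rw [← h2]; ring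
  have h4 : f (x + d) - f x - L d ≤ β * ‖d‖ * ‖d‖ := by
    rw [← h3]
    calc g (x + d) - g x ≤ ‖g (x + d) - g x‖ := le_abs_self _
      _ ≤ β * ‖d‖ * ‖(x + d) - x‖ := key
      _ = β * ‖d‖ * ‖d‖ := by congr 1; congr 1; abel
  nlinarith [norm_nonneg d]

lemma block_descent {G : Type*} [NormedAddCommGroup G] [InnerProductSpace ℝ G] [CompleteSpace G]
    (f : G → ℝ) (β μ : ℝ) (hβ : 0 ≤ β) (hμ : 0 ≤ μ) (hdiff : Differentiable ℝ f)
    (hlip : ∀ x y, ‖fderiv ℝ f y - fderiv ℝ f x‖ ≤ β * ‖y - x‖) (x : G) :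
    f (x - μ • gradient f x) ≤ f x - (μ - β * μ ^ 2) * ‖gradient f x‖ ^ 2 := by
  have h := descent_lemma_s13 f β hβ hdiff hlip x (-(μ • gradient f x))
  have hsub : x + -(μ • gradient f x) = x - μ • gradient f x := by abel
  have hfd : fderiv ℝ f x (-(μ • gradient f x)) = -(μ * ‖gradient f x‖ ^ 2) := by
    have h2 : ⟪gradient f x, -(μ • gradient f x)⟫ = fderiv ℝ f x (-(μ • gradient f x)) :=
      InnerProductSpace.toDual_symm_apply
    rw [← h2, inner_neg_right, real_inner_smul_right, real_inner_self_eq_norm_sq]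
  have hnorm : ‖-(μ • gradient f x)‖ ^ 2 = μ ^ 2 * ‖gradient f x‖ ^ 2 := by
    rw [norm_neg, norm_smul, Real.norm_eq_abs, abs_of_nonneg hμ, mul_pow]
  rw [hsub, hfd, hnorm] at h
  nlinarith [h]

theorem stmt_13 {a b : ℕ}
    (Q : EuclideanSpace ℝ (Fin a) × EuclideanSpace ℝ (Fin b) → ℝ)
    (β μ : ℝ) (hβ : 0 < β) (hμ : 0 < μ) (hμβ : μ < 1 / β)
    (c : ℝ) (hbdd : ∀ p, c ≤ Q p)
    (hdiff : Differentiable ℝ Q)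
    (hlip : LipschitzWith (Real.toNNReal β) (fun p => fderiv ℝ Q p))
    (gθ : EuclideanSpace ℝ (Fin a) → EuclideanSpace ℝ (Fin b) → EuclideanSpace ℝ (Fin a))
    (gω : EuclideanSpace ℝ (Fin a) → EuclideanSpace ℝ (Fin b) → EuclideanSpace ℝ (Fin b))
    (hgθ : ∀ θ ω, gθ θ ω = gradient (fun θ' => Q (θ', ω)) θ)
    (hgω : ∀ θ ω, gω θ ω = gradient (fun ω' => Q (θ, ω')) ω)
    (θ : ℕ → EuclideanSpace ℝ (Fin a)) (ω : ℕ → EuclideanSpace ℝ (Fin b))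
    (hθ : ∀ t, θ (t + 1) = θ t - μ • gθ (θ t) (ω t))
    (hω : ∀ t, ω (t + 1) = ω t - μ • gω (θ (t + 1)) (ω t)) :
    Tendsto (fun t => ‖gθ (θ t) (ω t)‖) atTop (𝓝 0) ∧
      Tendsto (fun t => ‖gω (θ (t + 1)) (ω t)‖) atTop (𝓝 0) := by
  have hlipQ : ∀ p q, ‖fderiv ℝ Q p - fderiv ℝ Q q‖ ≤ β * ‖p - q‖ := by
    intro p q
    have := hlip.dist_le_mul p q
    simpa [dist_eq_norm, Real.coe_toNNReal β hβ.le] using this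
  -- partial derivatives
  have hfθ : ∀ w x, HasFDerivAt (fun θ' => Q (θ', w))
      ((fderiv ℝ Q (x, w)).comp (ContinuousLinearMap.inl ℝ _ _)) x := fun w x =>
    (hdiff (x, w)).hasFDerivAt.comp x (hasFDerivAt_prodMk_left x w)
  have hfω : ∀ z w, HasFDerivAt (fun ω' => Q (z, ω'))
      ((fderiv ℝ Q (z, w)).comp (ContinuousLinearMap.inr ℝ _ _)) w := fun z w =>
    (hdiff (z, w)).hasFDerivAt.comp w (hasFDerivAt_prodMk_right z w)
  have hlipθ : ∀ w x y, ‖fderiv ℝ (fun θ' => Q (θ', w)) y - fderiv ℝ (fun θ' => Q (θ', w)) x‖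
      ≤ β * ‖y - x‖ := by
    intro w x y
    rw [(hfθ w x).fderiv, (hfθ w y).fderiv, ← ContinuousLinearMap.sub_comp]
    apply ContinuousLinearMap.opNorm_le_bound _ (mul_nonneg hβ.le (norm_nonneg _))
    intro v
    have h1 : ‖(ContinuousLinearMap.inl ℝ (EuclideanSpace ℝ (Fin a)) (EuclideanSpace ℝ (Fin b))) v‖ = ‖v‖ := by
      simp [Prod.norm_def]
    calc ‖((fderiv ℝ Q (y, w) - fderiv ℝ Q (x, w)).comp
            (ContinuousLinearMap.inl ℝ _ _)) v‖
        ≤ ‖fderiv ℝ Q (y, w) - fderiv ℝ Q (x, w)‖ * ‖v‖ := by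
          rw [ContinuousLinearMap.comp_apply, ← h1]
          exact ContinuousLinearMap.le_opNorm _ _
      _ ≤ (β * ‖(y, w) - (x, w)‖) * ‖v‖ := by gcongr; exact hlipQ _ _
      _ = β * ‖y - x‖ * ‖v‖ := by
          congr 2
          simp [Prod.norm_def, Prod.sub_def, norm_nonneg]
  have hlipω : ∀ z w w', ‖fderiv ℝ (fun ω' => Q (z, ω')) w' - fderiv ℝ (fun ω' => Q (z, ω')) w‖
      ≤ β * ‖w' - w‖ := by
    intro z w w'
    rw [(hfω z w).fderiv, (hfω z w').fderiv, ← ContinuousLinearMap.sub_comp]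
    apply ContinuousLinearMap.opNorm_le_bound _ (mul_nonneg hβ.le (norm_nonneg _))
    intro v
    have h1 : ‖(ContinuousLinearMap.inr ℝ (EuclideanSpace ℝ (Fin a)) (EuclideanSpace ℝ (Fin b))) v‖ = ‖v‖ := by
      simp [Prod.norm_def]
    calc ‖((fderiv ℝ Q (z, w') - fderiv ℝ Q (z, w)).comp
            (ContinuousLinearMap.inr ℝ _ _)) v‖
        ≤ ‖fderiv ℝ Q (z, w') - fderiv ℝ Q (z, w)‖ * ‖v‖ := by
          rw [ContinuousLinearMap.comp_apply, ← h1]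
          exact ContinuousLinearMap.le_opNorm _ _
      _ ≤ (β * ‖(z, w') - (z, w)‖) * ‖v‖ := by gcongr; exact hlipQ _ _
      _ = β * ‖w' - w‖ * ‖v‖ := by
          congr 2
          simp [Prod.norm_def, Prod.sub_def, norm_nonneg]
  set V : ℕ → ℝ := fun t => Q (θ t, ω t) with hV
  set ε : ℝ := μ - β * μ ^ 2 with hε
  have hε0 : 0 < ε := by
    have h : μ * β < 1 := (lt_div_iff₀ hβ).mp hμβ
    rw [hε]; nlinarith
  have h1 : ∀ t, Q (θ (t + 1), ω t) ≤ V t - ε * ‖gθ (θ t) (ω t)‖ ^ 2 := by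
    intro t
    have hd : Differentiable ℝ (fun θ' => Q (θ', ω t)) := fun x => (hfθ (ω t) x).differentiableAt
    have key := block_descent (fun θ' => Q (θ', ω t)) β μ hβ.le hμ.le hd (hlipθ (ω t)) (θ t)
    rw [hθ t, hgθ (θ t) (ω t)]
    exact key
  have h2 : ∀ t, V (t + 1) ≤ Q (θ (t + 1), ω t) - ε * ‖gω (θ (t + 1)) (ω t)‖ ^ 2 := by
    intro t
    have hd : Differentiable ℝ (fun ω' => Q (θ (t + 1), ω')) :=
      fun x => (hfω (θ (t + 1)) x).differentiableAt
    have key := block_descent (fun ω' => Q (θ (t + 1), ω')) β μ hβ.le hμ.le hd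
      (hlipω (θ (t + 1))) (ω t)
    rw [hV]
    simp only
    rw [hω t, hgω (θ (t + 1)) (ω t)]
    exact key
  have hVmono : ∀ t, V (t + 1) ≤ V t := by
    intro t
    nlinarith [h1 t, h2 t, mul_nonneg hε0.le (sq_nonneg ‖gθ (θ t) (ω t)‖),
      mul_nonneg hε0.le (sq_nonneg ‖gω (θ (t + 1)) (ω t)‖)]
  have hbddV : BddBelow (Set.range V) := ⟨c, by rintro _ ⟨t, rfl⟩; exact hbdd _⟩
  have hconv : Tendsto V atTop (𝓝 (⨅ t, V t)) :=
    tendsto_atTop_ciInf (antitone_nat_of_succ_le hVmono) hbddV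
  have hconv' : Tendsto (fun t => V (t + 1)) atTop (𝓝 (⨅ t, V t)) :=
    hconv.comp (tendsto_add_atTop_nat 1)
  have hdiff0 : Tendsto (fun t => V t - V (t + 1)) atTop (𝓝 0) := by
    simpa using hconv.sub hconv'
  have hup : Tendsto (fun t => (V t - V (t + 1)) / ε) atTop (𝓝 0) := by
    simpa using hdiff0.div_const ε
  have hsqθ : Tendsto (fun t => ‖gθ (θ t) (ω t)‖ ^ 2) atTop (𝓝 0) := by
    apply squeeze_zero (fun t => sq_nonneg _) (fun t => ?_) hup
    rw [le_div_iff₀ hε0]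
    nlinarith [h1 t, h2 t, mul_nonneg hε0.le (sq_nonneg ‖gω (θ (t + 1)) (ω t)‖)]
  have hsqω : Tendsto (fun t => ‖gω (θ (t + 1)) (ω t)‖ ^ 2) atTop (𝓝 0) := by
    apply squeeze_zero (fun t => sq_nonneg _) (fun t => ?_) hup
    rw [le_div_iff₀ hε0]
    nlinarith [h1 t, h2 t, mul_nonneg hε0.le (sq_nonneg ‖gθ (θ t) (ω t)‖)]
  constructor
  · have := (Real.continuous_sqrt.tendsto 0).comp hsqθ
    simpa [Function.comp_def, Real.sqrt_sq, norm_nonneg] using this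
  · have := (Real.continuous_sqrt.tendsto 0).comp hsqω
    simpa [Function.comp_def, Real.sqrt_sq, norm_nonneg] using this
end
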